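/- Let S be a quadrant model whose group G(S) is finite, and let H(x,y) ∈ ℚ(x,y). If H is decoupled (H(x,y) = F(x) + G(y) whenever K(x,y) = 0, for rational F, G), then the alternating orbit sum H_α(x,y) := Σ_{γ∈G(S)} sign(γ)·H(γ(x,y)) vanishes identically. -/

import Mathlib

open scoped BigOperators

/-- Let `S` be a quadrant model whose group `G(S)` is finite, generated by two involutions
`Φ` and `Ψ`, acting on the pairs `(x,y)` canceling the kernel in such a way that `Φ`
preserves the second coordinate and `Ψ` the first, with sign homomorphism `sgn` taking the
value `-1` on both generators.  If `H(x,y)` is decoupled, i.e. `H(v) = f(π₁ v) + g(π₂ v)`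
for all pairs `v` canceling the kernel, then the alternating orbit sum
`H_α(v) = Σ_{γ ∈ G} sign(γ)·H(γ·v)` vanishes identically. -/
theorem decoupled_implies_alternating_orbit_sum_zero
    {G V A F : Type*} [Group G] [Fintype G] [Field F] [MulAction G V]
    (Φ Ψ : G) (hΦ2 : Φ * Φ = 1) (hΨ2 : Ψ * Ψ = 1) (hΦ1 : Φ ≠ 1) (hΨ1 : Ψ ≠ 1)
    (hgen : Subgroup.closure ({Φ, Ψ} : Set G) = ⊤)
    (π₁ π₂ : V → A)
    (hπ₂ : ∀ v : V, π₂ (Φ • v) = π₂ v)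
    (hπ₁ : ∀ v : V, π₁ (Ψ • v) = π₁ v)
    (sgn : G →* ℤ) (hsΦ : sgn Φ = -1) (hsΨ : sgn Ψ = -1)
    (H : V → F) (f g : A → F)
    (hdec : ∀ v : V, H v = f (π₁ v) + g (π₂ v)) :
    ∀ v : V, ∑ γ : G, ((sgn γ : ℤ) : F) * H (γ • v) = 0 := by
  intro v
  have key : ∀ σ : G, σ * σ = 1 → σ ≠ 1 → sgn σ = -1 → ∀ h : V → F,
      (∀ w : V, h (σ • w) = h w) →
      ∑ γ : G, ((sgn γ : ℤ) : F) * h (γ • v) = 0 := by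
    intro σ hσ2 hσ1 hs h hinv
    apply Finset.sum_involution (fun γ _ => σ * γ)
    · intro γ _
      have h1 : h ((σ * γ) • v) = h (γ • v) := by rw [mul_smul, hinv]
      rw [h1, map_mul, hs]
      push_cast
      ring
    · intro γ _ _ hc
      exact hσ1 (mul_eq_right.mp hc)
    · intro γ _; exact Finset.mem_univ _
    · intro γ _
      rw [← mul_assoc, hσ2, one_mul]
  have hsplit : ∀ γ : G, ((sgn γ : ℤ) : F) * H (γ • v)
      = ((sgn γ : ℤ) : F) * f (π₁ (γ • v)) + ((sgn γ : ℤ) : F) * g (π₂ (γ • v)) := by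
    intro γ; rw [hdec]; ring
  rw [Finset.sum_congr rfl (fun γ _ => hsplit γ), Finset.sum_add_distrib]
  rw [key Ψ hΨ2 hΨ1 hsΨ (fun w => f (π₁ w)) (fun w => by simp [hπ₁ w]),
      key Φ hΦ2 hΦ1 hsΦ (fun w => g (π₂ w)) (fun w => by simp [hπ₂ w])]
  simp
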